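/- For every ditree T, the packing number equals the domination number: ρ(T) = γ(T). -/

import Mathlib

open SimpleGraph

variable {V W : Type*}

/-- The closed out-neighborhood of `v` in the digraph with arc relation `A`. -/
def NplusC (A : V → V → Prop) (v : V) : Set V := insert v {u | A v u}

/-- The closed in-neighborhood of `v`. -/
def NminusC (A : V → V → Prop) (v : V) : Set V := insert v {u | A u v}

/-- The open out-neighborhood of `v`. -/
def NplusO (A : V → V → Prop) (v : V) : Set V := {u | A v u}

/-- The open in-neighborhood of `v`. -/
def NminusO (A : V → V → Prop) (v : V) : Set V := {u | A u v}

/-- `S` is a dominating set: every vertex is in a closed out-neighborhood of a member of `S`. -/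
def IsDomSet (A : V → V → Prop) (S : Set V) : Prop := ∀ u, ∃ v ∈ S, u ∈ NplusC A v

/-- The domination number of a digraph. -/
noncomputable def domNum (V : Type*) [Fintype V] (A : V → V → Prop) : ℕ :=
  sInf {n | ∃ S : Set V, IsDomSet A S ∧ S.ncard = n}

/-- `P` is a packing: closed in-neighborhoods of members are pairwise disjoint. -/
def IsPacking (A : V → V → Prop) (P : Set V) : Prop :=
  P.Pairwise fun x y => Disjoint (NminusC A x) (NminusC A y)

/-- The packing number of a digraph. -/
noncomputable def packNum (V : Type*) [Fintype V] (A : V → V → Prop) : ℕ :=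
  sSup {n | ∃ P : Set V, IsPacking A P ∧ P.ncard = n}

/-- `S` is a total dominating set: every vertex has an in-neighbor in `S`. -/
def IsTotalDomSet (A : V → V → Prop) (S : Set V) : Prop := ∀ u, ∃ v ∈ S, A v u

/-- The total domination number of a digraph. -/
noncomputable def totalDomNum (V : Type*) [Fintype V] (A : V → V → Prop) : ℕ :=
  sInf {n | ∃ S : Set V, IsTotalDomSet A S ∧ S.ncard = n}

/-- `P` is an open packing: open in-neighborhoods of members are pairwise disjoint. -/
def IsOpenPacking (A : V → V → Prop) (P : Set V) : Prop :=
  P.Pairwise fun x y => Disjoint (NminusO A x) (NminusO A y)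

/-- The open packing number of a digraph. -/
noncomputable def openPackNum (V : Type*) [Fintype V] (A : V → V → Prop) : ℕ :=
  sSup {n | ∃ P : Set V, IsOpenPacking A P ∧ P.ncard = n}

/-- The underlying (simple) graph of a digraph. -/
def ugr (A : V → V → Prop) : SimpleGraph V := SimpleGraph.fromRel A

/-- A ditree is a digraph whose underlying graph is a tree. -/
def IsDitree (A : V → V → Prop) : Prop := (ugr A).IsTree

/-- Arc relation of the Cartesian product of two digraphs. -/
def cartArc (A : V → V → Prop) (B : W → W → Prop) : V × W → V × W → Prop :=
  fun p q => (p.1 = q.1 ∧ B p.2 q.2) ∨ (p.2 = q.2 ∧ A p.1 q.1)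

/-- Arc relation of the direct product of two digraphs. -/
def dirArc (A : V → V → Prop) (B : W → W → Prop) : V × W → V × W → Prop :=
  fun p q => A p.1 q.1 ∧ B p.2 q.2

/-- The closed in-neighborhood graph of a digraph: distinct vertices are adjacent iff
their closed in-neighborhoods intersect. -/
def Ncg (A : V → V → Prop) : SimpleGraph V :=
  SimpleGraph.fromRel (fun u v => (NminusC A u ∩ NminusC A v).Nonempty)

/-- The open in-neighborhood graph of a digraph: distinct vertices are adjacent iff
their open in-neighborhoods intersect. -/
def Nog (A : V → V → Prop) : SimpleGraph V :=
  SimpleGraph.fromRel (fun u v => (NminusO A u ∩ NminusO A v).Nonempty)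

section DitreeAux

variable {V : Type*}

def adjP (A : V → V → Prop) (a b : V) : Prop := A a b ∨ A b a

lemma adjP_symm {A : V → V → Prop} {a b : V} (h : adjP A a b) : adjP A b a := h.symm

lemma adjP_ne {A : V → V → Prop} (hirr : ∀ v, ¬ A v v) {a b : V} (h : adjP A a b) : a ≠ b := by
  rintro rfl; cases h with
  | inl h => exact hirr a h
  | inr h => exact hirr a h

lemma chain_toWalk (G : SimpleGraph V) :
    ∀ (l : List V) (a c : V), List.Chain G.Adj a l →
      (a :: l).getLast (List.cons_ne_nil a l) = c →
      ∃ w : G.Walk a c, w.support = a :: l := by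
  intro l
  induction l with
  | nil =>
    intro a c _ hc
    simp only [List.getLast_singleton] at hc
    subst hc
    exact ⟨SimpleGraph.Walk.nil, rfl⟩
  | cons b t ih =>
    intro a c h hc
    replace h := List.chain_cons.mp h
    have hc' : (b :: t).getLast (List.cons_ne_nil b t) = c := by
      rw [← hc, List.getLast_cons (List.cons_ne_nil b t)]
    obtain ⟨w, hw⟩ := ih b c h.2 hc'
    exact ⟨SimpleGraph.Walk.cons h.1 w, by simp [hw]⟩

lemma path_eq {A : V → V → Prop} (hirr : ∀ v, ¬ A v v) (hacyc : (ugr A).IsAcyclic)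
    {a c : V} {l₁ l₂ : List V}
    (h₁ : List.Chain (adjP A) a l₁) (n₁ : (a :: l₁).Nodup)
    (e₁ : (a :: l₁).getLast (List.cons_ne_nil a l₁) = c)
    (h₂ : List.Chain (adjP A) a l₂) (n₂ : (a :: l₂).Nodup)
    (e₂ : (a :: l₂).getLast (List.cons_ne_nil a l₂) = c) :
    a :: l₁ = a :: l₂ := by
  have conv : ∀ (x y : V), adjP A x y → (ugr A).Adj x y := by
    intro x y h
    rw [ugr, SimpleGraph.fromRel_adj]
    exact ⟨adjP_ne hirr h, h⟩
  obtain ⟨w₁, hw₁⟩ := chain_toWalk (ugr A) l₁ a c (List.Chain.imp conv h₁) e₁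
  obtain ⟨w₂, hw₂⟩ := chain_toWalk (ugr A) l₂ a c (List.Chain.imp conv h₂) e₂
  have hp₁ : w₁.IsPath := by rw [SimpleGraph.Walk.isPath_def, hw₁]; exact n₁
  have hp₂ : w₂.IsPath := by rw [SimpleGraph.Walk.isPath_def, hw₂]; exact n₂
  have heq : (⟨w₁, hp₁⟩ : (ugr A).Path a c) = ⟨w₂, hp₂⟩ := hacyc.path_unique _ _
  rw [← hw₁, ← hw₂, show w₁ = w₂ from congrArg Subtype.val heq]

lemma chain_take {R : V → V → Prop} :
    ∀ (l₁ : List V) (a b : V) (l₂ : List V),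
      List.Chain R a (l₁ ++ b :: l₂) → List.Chain R a (l₁ ++ [b]) := by
  intro l₁
  induction l₁ with
  | nil => intro a b l₂ h; rw [List.nil_append] at h; exact List.chain_cons.mpr ⟨(List.chain_cons.mp h).1, List.Chain.nil⟩
  | cons c t ih =>
    intro a b l₂ h
    rw [List.cons_append] at h ⊢; replace h := List.chain_cons.mp h; refine List.chain_cons.mpr ?_
    exact ⟨h.1, ih c b l₂ h.2⟩

lemma getLast_snoc (a b : V) (l : List V) :
    (a :: (l ++ [b])).getLast (List.cons_ne_nil _ _) = b := by
  simp

def DomOn (A : V → V → Prop) (Wf X S : Finset V) : Prop :=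
  ∀ z ∈ Wf, z ∉ X → ∃ s ∈ S, z = s ∨ A s z

def PackOn (A : V → V → Prop) (Wf P : Finset V) : Prop :=
  ∀ p ∈ P, ∀ q ∈ P, p ≠ q → ∀ c ∈ Wf, ¬((c = p ∨ A c p) ∧ (c = q ∨ A c q))

lemma core [Fintype V] (A : V → V → Prop) (hirr : ∀ v, ¬ A v v)
    (hacyc : (ugr A).IsAcyclic) :
    ∀ (n : ℕ) (Wf X : Finset V), Wf.card ≤ n → X ⊆ Wf →
      ∃ S P : Finset V, S ⊆ Wf ∧ P ⊆ Wf ∧ DomOn A Wf X S ∧ PackOn A Wf P ∧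
        (∀ p ∈ P, p ∉ X) ∧ S.card ≤ P.card := by
  classical
  intro n
  induction n with
  | zero =>
    intro Wf X hc _
    have hWe : Wf = ∅ := Finset.card_eq_zero.mp (Nat.le_antisymm hc (Nat.zero_le _))
    subst hWe
    exact ⟨∅, ∅, by simp, by simp, fun z hz => absurd hz (Finset.notMem_empty z),
      fun p hp => absurd hp (Finset.notMem_empty p), fun p hp => absurd hp (Finset.notMem_empty p),
      le_refl _⟩
  | succ n ih =>
    intro Wf X hcard hXW
    by_cases hWe : Wf = ∅
    · subst hWe
      exact ⟨∅, ∅, by simp, by simp, fun z hz => absurd hz (Finset.notMem_empty z),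
        fun p hp => absurd hp (Finset.notMem_empty p),
        fun p hp => absurd hp (Finset.notMem_empty p), le_refl _⟩
    -- Step A : an X-vertex with at most one neighbour can be dropped
    by_cases hA : ∃ z ∈ X, ∀ y ∈ Wf, ∀ y' ∈ Wf, adjP A y z → adjP A y' z → y = y'
    · obtain ⟨z, hzX, hdeg⟩ := hA
      have hzW : z ∈ Wf := hXW hzX
      have hcard' : (Wf.erase z).card ≤ n := by
        rw [Finset.card_erase_of_mem hzW]
        omega
      obtain ⟨S, P, hSW, hPW, hdom, hpack, hPX, hle⟩ :=
        ih (Wf.erase z) (X.erase z) hcard' (Finset.erase_subset_erase z hXW)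
      refine ⟨S, P, hSW.trans (Finset.erase_subset z Wf), hPW.trans (Finset.erase_subset z Wf),
        ?_, ?_, ?_, hle⟩
      · intro z' hz' hz'X
        have hz'z : z' ≠ z := fun h => hz'X (h ▸ hzX)
        exact hdom z' (Finset.mem_erase.mpr ⟨hz'z, hz'⟩)
          (fun h => hz'X (Finset.mem_of_mem_erase h))
      · intro p hp q hq hpq c hc hcon
        by_cases hcz : c = z
        · subst hcz
          have hcp : A c p := hcon.1.resolve_left
            (fun h => (Finset.mem_erase.mp (hPW hp)).1 h.symm)
          have hcq : A c q := hcon.2.resolve_left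
            (fun h => (Finset.mem_erase.mp (hPW hq)).1 h.symm)
          exact hpq (hdeg p (Finset.mem_of_mem_erase (hPW hp))
            q (Finset.mem_of_mem_erase (hPW hq)) (Or.inr hcp) (Or.inr hcq))
        · exact hpack p hp q hq hpq c (Finset.mem_erase.mpr ⟨hcz, hc⟩) hcon
      · intro p hp hpX
        exact hPX p hp (Finset.mem_erase.mpr ⟨(Finset.mem_erase.mp (hPW hp)).1, hpX⟩)
    -- Step B : an isolated non-X vertex
    by_cases hB : ∃ z ∈ Wf, z ∉ X ∧ ∀ y ∈ Wf, ¬ adjP A y z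
    · obtain ⟨z, hzW, hzX, hiso⟩ := hB
      have hcard' : (Wf.erase z).card ≤ n := by
        rw [Finset.card_erase_of_mem hzW]; omega
      have hXW' : X ⊆ Wf.erase z := fun x hx =>
        Finset.mem_erase.mpr ⟨fun h => hzX (h ▸ hx), hXW hx⟩
      obtain ⟨S, P, hSW, hPW, hdom, hpack, hPX, hle⟩ := ih (Wf.erase z) X hcard' hXW'
      have hzS : z ∉ S := fun h => (Finset.mem_erase.mp (hSW h)).1 rfl
      have hzP : z ∉ P := fun h => (Finset.mem_erase.mp (hPW h)).1 rfl
      refine ⟨insert z S, insert z P, Finset.insert_subset hzW (hSW.trans (Finset.erase_subset z Wf)),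
        Finset.insert_subset hzW (hPW.trans (Finset.erase_subset z Wf)), ?_, ?_, ?_, ?_⟩
      · intro z' hz' hz'X
        by_cases h : z' = z
        · exact ⟨z, Finset.mem_insert_self _ _, Or.inl h⟩
        · obtain ⟨s, hs, hsd⟩ := hdom z' (Finset.mem_erase.mpr ⟨h, hz'⟩) hz'X
          exact ⟨s, Finset.mem_insert_of_mem hs, hsd⟩
      · intro p hp q hq hpq c hc hcon
        -- no vertex of Wf is in a closed in-nbhd relation with z except z itself
        have key : ∀ r ∈ P, ∀ c' ∈ Wf, (c' = r ∨ A c' r) → c' ≠ z := by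
          intro r hr c' hc' hrel hcz
          subst hcz
          rcases hrel with h | h
          · exact (Finset.mem_erase.mp (hPW hr)).1 h.symm
          · exact hiso r (Finset.mem_of_mem_erase (hPW hr)) (Or.inr h)
        rcases Finset.mem_insert.mp hp with rfl | hp' <;>
          rcases Finset.mem_insert.mp hq with rfl | hq'
        · exact hpq rfl
        · -- p = z, q ∈ P
          rcases hcon.1 with h | h
          · exact key q hq' c hc (hcon.2.imp id id) (by rw [h])  -- c = z
          · exact hiso c hc (Or.inl h)
        · rcases hcon.2 with h | h
          · exact key p hp' c hc (hcon.1.imp id id) (by rw [h])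
          · exact hiso c hc (Or.inl h)
        · by_cases hcz : c = z
          · exact key p hp' c hc (hcon.1.imp id id) hcz
          · exact hpack p hp' q hq' hpq c (Finset.mem_erase.mpr ⟨hcz, hc⟩) hcon
      · intro p hp
        rcases Finset.mem_insert.mp hp with rfl | hp'
        · exact hzX
        · exact hPX p hp'
      · rw [Finset.card_insert_of_notMem hzS, Finset.card_insert_of_notMem hzP]
        omega
    -- main case
    push_neg at hA hB
    have hnbr : ∀ z ∈ Wf, ∃ y ∈ Wf, adjP A y z := by
      intro z hz
      by_cases hzX : z ∈ X
      · obtain ⟨y, hy, y', hy', h1, h2, hne⟩ := hA z hzX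
        exact ⟨y, hy, h1⟩
      · exact hB z hz hzX
    -- longest path machinery
    set PS : Set ℕ := {m | ∃ (a : V) (l : List V), List.Chain (adjP A) a l ∧ (a :: l).Nodup ∧
      (∀ x ∈ a :: l, x ∈ Wf) ∧ (a :: l).length = m} with hPS
    obtain ⟨z0, hz0⟩ := Finset.nonempty_iff_ne_empty.mpr hWe
    have hbdd : BddAbove PS := by
      refine ⟨Fintype.card V, ?_⟩
      rintro m ⟨a, l, h1, h2, h3, rfl⟩
      exact h2.length_le_card
    have hnePS : PS.Nonempty := ⟨1, z0, [], List.Chain.nil, by simp, by simpa using hz0, rfl⟩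
    obtain ⟨u, l, hchain, hnd, hmemW, hlen⟩ := Nat.sSup_mem hnePS hbdd
    have hmax : ∀ (b : V) (m : List V), List.Chain (adjP A) b m → (b :: m).Nodup →
        (∀ x ∈ b :: m, x ∈ Wf) → (b :: m).length ≤ (u :: l).length := by
      intro b m h1 h2 h3
      rw [hlen]; exact le_csSup hbdd ⟨b, m, h1, h2, h3, rfl⟩
    have huW : u ∈ Wf := hmemW u (by simp)
    obtain ⟨v, t, rfl⟩ : ∃ v t, l = v :: t := by
      cases l with
      | cons v t => exact ⟨v, t, rfl⟩
      | nil =>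
        exfalso
        obtain ⟨y, hyW, hy⟩ := hnbr u huW
        have := hmax y [u] (List.chain_cons.mpr ⟨hy, List.Chain.nil⟩)
          (by simp [adjP_ne hirr hy])
          (by intro x hx; rcases List.mem_cons.mp hx with rfl | hx
              · exact hyW
              · simpa using hmemW x (by simpa using hx))
        simp at this
    have huv : adjP A u v := (List.chain_cons.mp hchain).1
    have hchain2 : List.Chain (adjP A) v t := (List.chain_cons.mp hchain).2
    have hvW : v ∈ Wf := hmemW v (by simp)
    have hP1 : ∀ z ∈ Wf, adjP A z u → z = v := by
      intro z hzW hzu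
      by_contra hzv
      have hzu' : z ≠ u := adjP_ne hirr hzu
      by_cases hzl : z ∈ u :: v :: t
      · have hzt : z ∈ t := by
          rcases List.mem_cons.mp hzl with rfl | h
          · exact absurd rfl hzu'
          rcases List.mem_cons.mp h with rfl | h
          · exact absurd rfl hzv
          · exact h
        obtain ⟨t₁, t₂, rfl⟩ := List.append_of_mem hzt
        have hch1 : List.Chain (adjP A) u ((v :: t₁) ++ [z]) :=
          chain_take (v :: t₁) u z t₂ (by simpa using hchain)
        have hsub : List.Sublist (u :: ((v :: t₁) ++ [z])) (u :: ((v :: t₁) ++ z :: t₂)) :=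
          List.Sublist.cons₂ u
            (List.Sublist.append_left (List.Sublist.cons₂ z (List.nil_sublist t₂)) _)
        have hnd1 : (u :: ((v :: t₁) ++ [z])).Nodup := List.Nodup.sublist hsub (by simpa using hnd)
        have heq := path_eq hirr hacyc hch1 hnd1 (getLast_snoc u z (v :: t₁))
          (List.chain_cons.mpr ⟨adjP_symm hzu, List.Chain.nil⟩)
          (by simp [hzu'.symm]) (by simp)
        have hlen2 := congrArg List.length heq
        simp only [List.length_cons, List.length_append, List.length_singleton] at hlen2
        omega
      · have := hmax z (u :: v :: t) (List.chain_cons.mpr ⟨hzu, hchain⟩)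
          (List.nodup_cons.mpr ⟨hzl, hnd⟩)
          (by intro x hx; rcases List.mem_cons.mp hx with rfl | h
              · exact hzW
              · exact hmemW x h)
        simp only [List.length_cons] at this
        omega
    have huvne : u ≠ v := by
      have h := hnd
      simp only [List.nodup_cons, List.mem_cons] at h
      intro he; exact h.1 (by simp [he])
    cases t with
    | nil =>
      have hP2 : ∀ z ∈ Wf, adjP A z v → z = u := by
        intro z hzW hzv
        by_contra hzu
        have hzv' : z ≠ v := adjP_ne hirr hzv
        have := hmax u [v, z] (List.chain_cons.mpr ⟨huv,
            List.chain_cons.mpr ⟨adjP_symm hzv, List.Chain.nil⟩⟩)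
          (by simp [huvne, Ne.symm hzu, Ne.symm hzv', hzu, hzv'])
          (by intro x hx
              simp only [List.mem_cons, List.not_mem_nil, or_false] at hx
              rcases hx with rfl | rfl | rfl
              exacts [huW, hvW, hzW])
        simp only [List.length_cons] at this
        omega
      have huX : u ∉ X := by
        intro h
        obtain ⟨y, hyW, y', hy'W, h1, h2, hne⟩ := hA u h
        exact hne ((hP1 y hyW h1).trans (hP1 y' hy'W h2).symm)
      have hvX : v ∉ X := by
        intro h
        obtain ⟨y, hyW, y', hy'W, h1, h2, hne⟩ := hA v h
        exact hne ((hP2 y hyW h1).trans (hP2 y' hy'W h2).symm)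
      set W' := Wf \ {u, v} with hW'
      have hmemW' : ∀ y ∈ W', y ∈ Wf ∧ y ≠ u ∧ y ≠ v := by
        intro y hy
        rw [Finset.mem_sdiff] at hy
        simp only [Finset.mem_insert, Finset.mem_singleton] at hy
        exact ⟨hy.1, fun h => hy.2 (Or.inl h), fun h => hy.2 (Or.inr h)⟩
      have hW'sub : W' ⊆ Wf.erase u := by
        intro x hx
        obtain ⟨h1, h2, _⟩ := hmemW' x hx
        exact Finset.mem_erase.mpr ⟨h2, h1⟩
      have hcard' : W'.card ≤ n := by
        have h1 : 1 ≤ Wf.card := Finset.card_pos.mpr ⟨u, huW⟩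
        have h2 := Finset.card_le_card hW'sub
        rw [Finset.card_erase_of_mem huW] at h2
        omega
      have hXW' : X ⊆ W' := by
        intro x hx
        refine Finset.mem_sdiff.mpr ⟨hXW hx, ?_⟩
        simp only [Finset.mem_insert, Finset.mem_singleton]
        push_neg
        exact ⟨fun h => huX (h ▸ hx), fun h => hvX (h ▸ hx)⟩
      obtain ⟨S', P', hS'W, hP'W, hdom', hpack', hP'X, hle'⟩ := ih W' X hcard' hXW'
      have halpha : ∀ r, r ∈ P' → ∀ c ∈ Wf, (c = r ∨ A c r) → c ∈ W' := by
        intro r hr c hcW hrel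
        obtain ⟨hrW, hru, hrv⟩ := hmemW' r (hP'W hr)
        rcases hrel with rfl | hA'
        · exact hP'W hr
        · refine Finset.mem_sdiff.mpr ⟨hcW, ?_⟩
          simp only [Finset.mem_insert, Finset.mem_singleton]
          push_neg
          constructor
          · rintro rfl; exact hrv (hP1 r hrW (Or.inr hA'))
          · rintro rfl; exact hru (hP2 r hrW (Or.inr hA'))
      obtain ⟨s0, hs0W, hs0u, hs0v⟩ : ∃ s0 ∈ Wf, (u = s0 ∨ A s0 u) ∧ (v = s0 ∨ A s0 v) := by
        by_cases h : A v u
        · exact ⟨v, hvW, Or.inr h, Or.inl rfl⟩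
        · exact ⟨u, huW, Or.inl rfl, Or.inr (huv.resolve_right h)⟩
      have hs0S' : s0 ∉ S' := by
        intro h
        obtain ⟨hsW, h1, h2⟩ := hmemW' s0 (hS'W h)
        rcases hs0u with he | hA'
        · exact h1 he.symm
        · exact h2 (hP1 s0 hsW (Or.inl hA'))
      have huP' : u ∉ P' := fun h => (hmemW' u (hP'W h)).2.1 rfl
      have hW'Wf : W' ⊆ Wf := fun x hx => (Finset.mem_sdiff.mp hx).1
      refine ⟨insert s0 S', insert u P', Finset.insert_subset hs0W (hS'W.trans hW'Wf),
        Finset.insert_subset huW (hP'W.trans hW'Wf), ?_, ?_, ?_, ?_⟩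
      · intro z hz hzX
        by_cases hzu : z = u
        · subst hzu; exact ⟨s0, Finset.mem_insert_self _ _, hs0u⟩
        by_cases hzv : z = v
        · subst hzv; exact ⟨s0, Finset.mem_insert_self _ _, hs0v⟩
        · obtain ⟨s, hs, hsd⟩ := hdom' z (Finset.mem_sdiff.mpr ⟨hz, by simp [hzu, hzv]⟩) hzX
          exact ⟨s, Finset.mem_insert_of_mem hs, hsd⟩
      · intro p hp q hq hpq c hcW hcon
        rcases Finset.mem_insert.mp hp with rfl | hp' <;>
          rcases Finset.mem_insert.mp hq with rfl | hq'
        · exact absurd rfl hpq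
        · have hc' := halpha q hq' c hcW hcon.2
          obtain ⟨hcWf, hcu, hcv⟩ := hmemW' c hc'
          rcases hcon.1 with rfl | hA'
          · exact hcu rfl
          · exact hcv (hP1 c hcW (Or.inl hA'))
        · have hc' := halpha p hp' c hcW hcon.1
          obtain ⟨hcWf, hcu, hcv⟩ := hmemW' c hc'
          rcases hcon.2 with rfl | hA'
          · exact hcu rfl
          · exact hcv (hP1 c hcW (Or.inl hA'))
        · have hc' := halpha p hp' c hcW hcon.1
          exact hpack' p hp' q hq' hpq c hc' hcon
      · intro p hp
        rcases Finset.mem_insert.mp hp with rfl | hp'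
        · exact huX
        · exact hP'X p hp'
      · rw [Finset.card_insert_of_notMem hs0S', Finset.card_insert_of_notMem huP']
        omega
    | cons w t' =>
      have hwW : w ∈ Wf := hmemW w (by simp)
      have hvw : adjP A v w := (List.chain_cons.mp hchain2).1
      have hwu : w ≠ u := by
        have h := hnd
        simp only [List.nodup_cons, List.mem_cons] at h
        intro he; exact h.1 (Or.inr (Or.inl he.symm))
      have hwv : w ≠ v := (adjP_ne hirr hvw).symm
      have hLeaf : ∀ z ∈ Wf, adjP A z v → z ≠ w → ∀ y ∈ Wf, adjP A y z → y = v := by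
        intro z hzW hzv hzw y hyW hyz
        by_contra hyv
        by_cases hzu : z = u
        · subst hzu; exact hyv (hP1 y hyW hyz)
        have hzv' : z ≠ v := adjP_ne hirr hzv
        have hznl : z ∉ u :: v :: w :: t' := by
          intro hzl
          have hzt' : z ∈ t' := by
            rcases List.mem_cons.mp hzl with rfl | h; · exact absurd rfl hzu
            rcases List.mem_cons.mp h with rfl | h; · exact absurd rfl hzv'
            rcases List.mem_cons.mp h with rfl | h; · exact absurd rfl hzw
            exact h
          obtain ⟨s₁, s₂, hs⟩ := List.append_of_mem hzt'
          have hch1 : List.Chain (adjP A) v ((w :: s₁) ++ [z]) :=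
            chain_take (w :: s₁) v z s₂ (by rw [hs] at hchain2; simpa using hchain2)
          have hsub : List.Sublist (v :: ((w :: s₁) ++ [z])) (v :: ((w :: s₁) ++ z :: s₂)) :=
            List.Sublist.cons₂ v
              (List.Sublist.append_left (List.Sublist.cons₂ z (List.nil_sublist s₂)) _)
          have hnd1 : (v :: ((w :: s₁) ++ [z])).Nodup := by
            refine List.Nodup.sublist hsub ?_
            have h2 := List.Nodup.of_cons hnd
            rw [hs] at h2
            simpa using h2
          have heq := path_eq hirr hacyc hch1 hnd1 (getLast_snoc v z (w :: s₁))
            (List.chain_cons.mpr ⟨adjP_symm hzv, List.Chain.nil⟩)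
            (by simp [Ne.symm hzv']) (by simp)
          have hlen2 := congrArg List.length heq
          simp only [List.length_cons, List.length_append, List.length_singleton] at hlen2
          omega
        have hyz' : y ≠ z := adjP_ne hirr hyz
        have hyu : y ≠ u := by
          rintro rfl
          exact hzv' (hP1 z hzW (adjP_symm hyz))
        by_cases hyl : y ∈ u :: v :: w :: t'
        · have hyt : y ∈ w :: t' := by
            rcases List.mem_cons.mp hyl with rfl | h; · exact absurd rfl hyu
            rcases List.mem_cons.mp h with rfl | h; · exact absurd rfl hyv
            exact h
          obtain ⟨t₁, t₂, ht⟩ := List.append_of_mem hyt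
          have hch1 : List.Chain (adjP A) v (t₁ ++ [y]) :=
            chain_take t₁ v y t₂ (by rw [← ht]; exact hchain2)
          have hsub : List.Sublist (v :: (t₁ ++ [y])) (v :: (t₁ ++ y :: t₂)) :=
            List.Sublist.cons₂ v
              (List.Sublist.append_left (List.Sublist.cons₂ y (List.nil_sublist t₂)) _)
          have hnd1 : (v :: (t₁ ++ [y])).Nodup := by
            refine List.Nodup.sublist hsub ?_
            rw [← ht]
            exact List.Nodup.of_cons hnd
          have hch2 : List.Chain (adjP A) v [z, y] :=
            List.chain_cons.mpr ⟨adjP_symm hzv,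
              List.chain_cons.mpr ⟨adjP_symm hyz, List.Chain.nil⟩⟩
          have hvy : v ≠ y := fun h => hyv h.symm
          have hnd2 : (v :: [z, y]).Nodup := by
            simp [Ne.symm hzv', hvy, Ne.symm hyz']
          have heq := path_eq hirr hacyc hch1 hnd1 (getLast_snoc v y t₁) hch2 hnd2
            (getLast_snoc v y [z])
          have hzmem : z ∈ v :: (t₁ ++ [y]) := by rw [heq]; simp
          have hzt₁ : z ∉ t₁ := by
            intro h
            apply hznl
            have h2 : z ∈ w :: t' := by rw [ht]; exact List.mem_append.mpr (Or.inl h)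
            exact List.mem_cons_of_mem u (List.mem_cons_of_mem v h2)
          rcases List.mem_cons.mp hzmem with h | h
          · exact hzv' h
          rcases List.mem_append.mp h with h | h
          · exact hzt₁ h
          · have hzy : z = y := by simpa using h
            exact hyz' hzy.symm
        · have := hmax y (z :: v :: w :: t')
            (List.chain_cons.mpr ⟨hyz, List.chain_cons.mpr ⟨hzv, hchain2⟩⟩)
            (by
              rw [List.nodup_cons]
              constructor
              · intro hmem
                rcases List.mem_cons.mp hmem with h | h
                · exact hyz' h
                · exact hyl (List.mem_cons_of_mem u h)
              · rw [List.nodup_cons]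
                constructor
                · intro hmem
                  exact hznl (List.mem_cons_of_mem u hmem)
                · exact List.Nodup.of_cons hnd)
            (by
              intro x hx
              rcases List.mem_cons.mp hx with rfl | hx; · exact hyW
              rcases List.mem_cons.mp hx with rfl | hx; · exact hzW
              exact hmemW x (List.mem_cons_of_mem u hx))
          simp only [List.length_cons] at this
          omega
      -- the set of leaf-neighbours of v
      set L := Wf.filter (fun z => adjP A z v ∧ z ≠ w) with hLdef
      have hLmem : ∀ ℓ ∈ L, ℓ ∈ Wf ∧ adjP A ℓ v ∧ ℓ ≠ w := by
        intro ℓ h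
        have h2 := Finset.mem_filter.mp h
        exact ⟨h2.1, h2.2.1, h2.2.2⟩
      have hLleaf : ∀ ℓ ∈ L, ∀ y ∈ Wf, adjP A y ℓ → y = v := by
        intro ℓ hℓ
        obtain ⟨h1, h2, h3⟩ := hLmem ℓ hℓ
        exact hLeaf ℓ h1 h2 h3
      have hvL : v ∉ L := fun h => adjP_ne hirr (hLmem v h).2.1 rfl
      have huL : u ∈ L := Finset.mem_filter.mpr ⟨huW, huv, Ne.symm hwu⟩
      have hLX : ∀ ℓ ∈ L, ℓ ∉ X := by
        intro ℓ hℓ hℓX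
        obtain ⟨y, hyW, y', hy'W, h1, h2, hne⟩ := hA ℓ hℓX
        exact hne ((hLleaf ℓ hℓ y hyW h1).trans (hLleaf ℓ hℓ y' hy'W h2).symm)
      have hvnbr : ∀ y ∈ Wf, adjP A v y → (y ∈ L ∨ y = w) := by
        intro y hy hadj
        by_cases hyw : y = w
        · exact Or.inr hyw
        · exact Or.inl (Finset.mem_filter.mpr ⟨hy, adjP_symm hadj, hyw⟩)
      set Lin := L.filter (fun ℓ => ¬ A v ℓ) with hLindef
      set Lob := L.filter (fun ℓ => A v ℓ) with hLobdef
      have hLinL : Lin ⊆ L := Finset.filter_subset _ _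
      have hLobL : Lob ⊆ L := Finset.filter_subset _ _
      set R := insert v L with hRdef
      set W' := Wf \ R with hW'def
      have hW'Wf : W' ⊆ Wf := fun x hx => (Finset.mem_sdiff.mp hx).1
      have hmemW' : ∀ y ∈ W', y ∈ Wf ∧ y ≠ v ∧ y ∉ L := by
        intro y hy
        have h2 := Finset.mem_sdiff.mp hy
        rw [hRdef, Finset.mem_insert] at h2
        push_neg at h2
        exact ⟨h2.1, h2.2.1, h2.2.2⟩
      have hmemW'' : ∀ y ∈ Wf, y ≠ v → y ∉ L → y ∈ W' := by
        intro y h1 h2 h3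
        rw [hW'def, Finset.mem_sdiff, hRdef, Finset.mem_insert]
        push_neg
        exact ⟨h1, h2, h3⟩
      have hwL : w ∉ L := fun h => (hLmem w h).2.2 rfl
      have hwW' : w ∈ W' := hmemW'' w hwW (Ne.symm hwv.symm) hwL
      have hcard' : W'.card ≤ n := by
        have h1 : 1 ≤ Wf.card := Finset.card_pos.mpr ⟨u, huW⟩
        have hsub : W' ⊆ Wf.erase v := by
          intro x hx
          obtain ⟨hx1, hx2, _⟩ := hmemW' x hx
          exact Finset.mem_erase.mpr ⟨hx2, hx1⟩
        have h2 := Finset.card_le_card hsub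
        rw [Finset.card_erase_of_mem hvW] at h2
        omega
      have hXR : X \ R ⊆ W' := by
        intro x hx
        rw [Finset.mem_sdiff] at hx ⊢
        exact ⟨hXW hx.1, hx.2⟩
      -- facts about in-neighbourhoods of removed vertices
      have hfromR : ∀ r : V, (r = v ∨ r ∈ L) → ∀ p ∈ W', (r = p ∨ A r p) → p = w ∧ r = v := by
        intro r hr p hp hrel
        obtain ⟨hpW, hpv, hpL⟩ := hmemW' p hp
        rcases hrel with rfl | hA'
        · rcases hr with rfl | hrL
          · exact absurd rfl hpv
          · exact absurd hrL hpL
        · rcases hr with rfl | hrL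
          · rcases hvnbr p hpW (Or.inl hA') with h | h
            · exact absurd h hpL
            · exact ⟨h, rfl⟩
          · exact absurd (hLleaf r hrL p hpW (Or.inr hA')) hpv
      have hkey1 : ∀ P₀ : Finset V, P₀ ⊆ W' → PackOn A W' P₀ →
          ∀ p ∈ P₀, ∀ q ∈ P₀, p ≠ q → ∀ c ∈ Wf, ¬((c = p ∨ A c p) ∧ (c = q ∨ A c q)) := by
        intro P₀ hPW₀ hpack₀ p hp q hq hpq c hcW hcon
        by_cases hcW' : c ∈ W'
        · exact hpack₀ p hp q hq hpq c hcW' hcon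
        · have hcR : c = v ∨ c ∈ L := by
            by_contra h
            push_neg at h
            exact hcW' (hmemW'' c hcW h.1 h.2)
          have h1 := hfromR c hcR p (hPW₀ hp) hcon.1
          have h2 := hfromR c hcR q (hPW₀ hq) hcon.2
          exact hpq (h1.1.trans h2.1.symm)
      have hkey2 : ∀ ℓ ∈ Lin, ∀ p ∈ W', ∀ c ∈ Wf, ¬((c = ℓ ∨ A c ℓ) ∧ (c = p ∨ A c p)) := by
        intro ℓ hℓ p hp c hcW hcon
        obtain ⟨hpW, hpv, hpL⟩ := hmemW' p hp
        have hℓL := hLinL hℓ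
        rcases hcon.1 with rfl | hA'
        · rcases hcon.2 with rfl | hA'
          · exact hpL hℓL
          · exact hpv (hLleaf c hℓL p hpW (Or.inr hA'))
        · have hcv : c = v := hLleaf ℓ hℓL c hcW (Or.inl hA')
          subst hcv
          exact (Finset.mem_filter.mp hℓ).2 hA'
      have hkey3 : ∀ ℓ ∈ Lin, ∀ c ∈ Wf, (c = ℓ ∨ A c ℓ) → c = ℓ := by
        intro ℓ hℓ c hcW hrel
        rcases hrel with rfl | hA'
        · rfl
        · have hcv : c = v := hLleaf ℓ (hLinL hℓ) c hcW (Or.inl hA')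
          subst hcv
          exact absurd hA' (Finset.mem_filter.mp hℓ).2
      have hkey5 : ∀ ℓ1 ∈ Lob, ∀ ℓ ∈ Lin, ∀ c ∈ Wf, ¬((c = ℓ1 ∨ A c ℓ1) ∧ (c = ℓ ∨ A c ℓ)) := by
        intro ℓ1 hℓ1 ℓ hℓ c hcW hcon
        have hcℓ : c = ℓ := hkey3 ℓ hℓ c hcW hcon.2
        subst hcℓ
        rcases hcon.1 with rfl | hA'
        · have h1 := (Finset.mem_filter.mp hℓ1).2
          exact (Finset.mem_filter.mp hℓ).2 h1
        · exact hvL ((hLleaf ℓ1 (hLobL hℓ1) c (hLmem c (hLinL hℓ)).1 (Or.inl hA')) ▸ hLinL hℓ)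
      have hkey4 : ∀ ℓ1 ∈ Lob, ∀ P₀ : Finset V, P₀ ⊆ W' → ¬(A v w ∧ w ∈ P₀) →
          ∀ p ∈ P₀, ∀ c ∈ Wf, ¬((c = ℓ1 ∨ A c ℓ1) ∧ (c = p ∨ A c p)) := by
        intro ℓ1 hℓ1 P₀ hPW₀ hnb p hp c hcW hcon
        obtain ⟨hpW, hpv, hpL⟩ := hmemW' p (hPW₀ hp)
        rcases hcon.1 with rfl | hA'
        · rcases hcon.2 with rfl | hA'
          · exact hpL (hLobL hℓ1)
          · exact hpv (hLleaf c (hLobL hℓ1) p hpW (Or.inr hA'))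
        · have hcv : c = v := hLleaf ℓ1 (hLobL hℓ1) c hcW (Or.inl hA')
          subst hcv
          rcases hcon.2 with rfl | hA''
          · exact absurd rfl hpv
          · rcases hvnbr p hpW (Or.inl hA'') with h | h
            · exact hpL h
            · subst h
              exact hnb ⟨hA'', hp⟩
      by_cases hLobE : Lob = ∅
      · -- no out-oriented leaves at v
        have hLinall : ∀ ℓ ∈ L, ℓ ∈ Lin := by
          intro ℓ hℓ
          refine Finset.mem_filter.mpr ⟨hℓ, fun hAv => ?_⟩
          have h2 : ℓ ∈ Lob := Finset.mem_filter.mpr ⟨hℓ, hAv⟩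
          rw [hLobE] at h2
          exact absurd h2 (Finset.notMem_empty ℓ)
        obtain ⟨S', P', hS'W, hP'W, hdom', hpack', hP'X, hle'⟩ := ih W' (X \ R) hcard' hXR
        have hP'Xfull : ∀ p ∈ P', p ∉ X := by
          intro p hp hpX
          obtain ⟨hpW, hpv, hpL⟩ := hmemW' p (hP'W hp)
          exact hP'X p hp (Finset.mem_sdiff.mpr ⟨hpX, by
            rw [hRdef, Finset.mem_insert]; push_neg; exact ⟨hpv, hpL⟩⟩)
        have hdisjS : Disjoint S' Lin := Finset.disjoint_left.mpr
          (fun a ha hb => (hmemW' a (hS'W ha)).2.2 (hLinL hb))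
        have hdisjP : Disjoint P' Lin := Finset.disjoint_left.mpr
          (fun a ha hb => (hmemW' a (hP'W ha)).2.2 (hLinL hb))
        have hLinWf : Lin ⊆ Wf := fun x hx => (hLmem x (hLinL hx)).1
        refine ⟨S' ∪ Lin, P' ∪ Lin, Finset.union_subset (hS'W.trans hW'Wf) hLinWf,
          Finset.union_subset (hP'W.trans hW'Wf) hLinWf, ?_, ?_, ?_, ?_⟩
        · intro z hz hzX
          by_cases hzv : z = v
          · subst hzv
            have huLin := hLinall u huL
            refine ⟨u, Finset.mem_union_right _ huLin, Or.inr (huv.resolve_right ?_)⟩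
            exact (Finset.mem_filter.mp huLin).2
          by_cases hzL : z ∈ L
          · exact ⟨z, Finset.mem_union_right _ (hLinall z hzL), Or.inl rfl⟩
          · obtain ⟨s, hs, hsd⟩ := hdom' z (hmemW'' z hz hzv hzL)
              (fun h => hzX (Finset.mem_sdiff.mp h).1)
            exact ⟨s, Finset.mem_union_left _ hs, hsd⟩
        · intro p hp q hq hpq c hcW hcon
          rcases Finset.mem_union.mp hp with hp' | hp' <;>
            rcases Finset.mem_union.mp hq with hq' | hq'
          · exact hkey1 P' hP'W hpack' p hp' q hq' hpq c hcW hcon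
          · exact hkey2 q hq' p (hP'W hp') c hcW ⟨hcon.2, hcon.1⟩
          · exact hkey2 p hp' q (hP'W hq') c hcW hcon
          · exact hpq ((hkey3 p hp' c hcW hcon.1).symm.trans (hkey3 q hq' c hcW hcon.2))
        · intro p hp
          rcases Finset.mem_union.mp hp with hp' | hp'
          · exact hP'Xfull p hp'
          · exact hLX p (hLinL hp')
        · rw [Finset.card_union_of_disjoint hdisjS, Finset.card_union_of_disjoint hdisjP]
          omega
      · -- there is an out-oriented leaf ℓ1
        obtain ⟨ℓ1, hℓ1⟩ := Finset.nonempty_of_ne_empty hLobE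
        have hℓ1L := hLobL hℓ1
        have hℓ1Wf : ℓ1 ∈ Wf := (hLmem ℓ1 hℓ1L).1
        obtain ⟨S₀, P₀, hS₀W, hP₀W, hpack₀, hP₀X, hle₀, hdom₀, hdomw, hnb⟩ :
            ∃ S₀ P₀ : Finset V, S₀ ⊆ W' ∧ P₀ ⊆ W' ∧ PackOn A W' P₀ ∧ (∀ p ∈ P₀, p ∉ X) ∧
              S₀.card ≤ P₀.card ∧
              (∀ z ∈ W', z ∉ X → z ≠ w → ∃ s ∈ S₀, z = s ∨ A s z) ∧
              (w ∉ X → ((∃ s ∈ S₀, w = s ∨ A s w) ∨ A v w)) ∧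
              ¬(A v w ∧ w ∈ P₀) := by
          obtain ⟨S', P', hS'W, hP'W, hdom', hpack', hP'X, hle'⟩ := ih W' (X \ R) hcard' hXR
          have hXfree : ∀ z, z ∉ X → z ∉ X \ R := fun z hz h => hz (Finset.mem_sdiff.mp h).1
          by_cases hbad : A v w ∧ w ∈ P'
          · obtain ⟨S'', P'', hS''W, hP''W, hdom'', hpack'', hP''X, hle''⟩ :=
              ih W' (insert w (X \ R)) hcard' (Finset.insert_subset hwW' hXR)
            refine ⟨S'', P'', hS''W, hP''W, hpack'', ?_, hle'', ?_, ?_, ?_⟩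
            · intro p hp hpX
              obtain ⟨hpW, hpv, hpL⟩ := hmemW' p (hP''W hp)
              refine hP''X p hp (Finset.mem_insert_of_mem (Finset.mem_sdiff.mpr ⟨hpX, ?_⟩))
              rw [hRdef, Finset.mem_insert]; push_neg; exact ⟨hpv, hpL⟩
            · intro z hz hzX hzw
              refine hdom'' z hz ?_
              rw [Finset.mem_insert]
              push_neg
              exact ⟨hzw, hXfree z hzX⟩
            · intro _; exact Or.inr hbad.1
            · rintro ⟨_, hwP⟩
              exact hP''X w hwP (Finset.mem_insert_self _ _)
          · have hP'Xfull : ∀ p ∈ P', p ∉ X := by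
              intro p hp hpX
              obtain ⟨hpW, hpv, hpL⟩ := hmemW' p (hP'W hp)
              exact hP'X p hp (Finset.mem_sdiff.mpr ⟨hpX, by
                rw [hRdef, Finset.mem_insert]; push_neg; exact ⟨hpv, hpL⟩⟩)
            refine ⟨S', P', hS'W, hP'W, hpack', hP'Xfull, hle', ?_, ?_, hbad⟩
            · intro z hz hzX _
              exact hdom' z hz (hXfree z hzX)
            · intro hwX
              exact Or.inl (hdom' w hwW' (hXfree w hwX))
        have hLinWf : Lin ⊆ Wf := fun x hx => (hLmem x (hLinL hx)).1
        have hdisjS : Disjoint S₀ Lin := Finset.disjoint_left.mpr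
          (fun a ha hb => (hmemW' a (hS₀W ha)).2.2 (hLinL hb))
        have hdisjP : Disjoint P₀ Lin := Finset.disjoint_left.mpr
          (fun a ha hb => (hmemW' a (hP₀W ha)).2.2 (hLinL hb))
        have hvS : v ∉ S₀ ∪ Lin := by
          rw [Finset.mem_union]
          push_neg
          exact ⟨fun h => (hmemW' v (hS₀W h)).2.1 rfl, fun h => hvL (hLinL h)⟩
        have hℓ1P : ℓ1 ∉ P₀ ∪ Lin := by
          rw [Finset.mem_union]
          push_neg
          constructor
          · intro h; exact (hmemW' ℓ1 (hP₀W h)).2.2 hℓ1L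
          · intro h
            exact (Finset.mem_filter.mp h).2 (Finset.mem_filter.mp hℓ1).2
        refine ⟨insert v (S₀ ∪ Lin), insert ℓ1 (P₀ ∪ Lin),
          Finset.insert_subset hvW (Finset.union_subset (hS₀W.trans hW'Wf) hLinWf),
          Finset.insert_subset hℓ1Wf (Finset.union_subset (hP₀W.trans hW'Wf) hLinWf),
          ?_, ?_, ?_, ?_⟩
        · intro z hz hzX
          by_cases hzv : z = v
          · exact ⟨v, Finset.mem_insert_self _ _, Or.inl hzv⟩
          by_cases hzL : z ∈ L
          · by_cases hAz : A v z
            · exact ⟨v, Finset.mem_insert_self _ _, Or.inr hAz⟩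
            · exact ⟨z, Finset.mem_insert_of_mem (Finset.mem_union_right _
                (Finset.mem_filter.mpr ⟨hzL, hAz⟩)), Or.inl rfl⟩
          by_cases hzw : z = w
          · subst hzw
            rcases hdomw hzX with ⟨s, hs, hsd⟩ | hAvw
            · exact ⟨s, Finset.mem_insert_of_mem (Finset.mem_union_left _ hs), hsd⟩
            · exact ⟨v, Finset.mem_insert_self _ _, Or.inr hAvw⟩
          · obtain ⟨s, hs, hsd⟩ := hdom₀ z (hmemW'' z hz hzv hzL) hzX hzw
            exact ⟨s, Finset.mem_insert_of_mem (Finset.mem_union_left _ hs), hsd⟩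
        · intro p hp q hq hpq c hcW hcon
          rcases Finset.mem_insert.mp hp with hpe | hp'
          · subst hpe
            rcases Finset.mem_insert.mp hq with hqe | hq'
            · exact absurd hqe.symm hpq
            · rcases Finset.mem_union.mp hq' with h | h
              · exact hkey4 p hℓ1 P₀ hP₀W hnb q h c hcW hcon
              · exact hkey5 p hℓ1 q h c hcW hcon
          · rcases Finset.mem_insert.mp hq with hqe | hq'
            · subst hqe
              rcases Finset.mem_union.mp hp' with h | h
              · exact hkey4 q hℓ1 P₀ hP₀W hnb p h c hcW ⟨hcon.2, hcon.1⟩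
              · exact hkey5 q hℓ1 p h c hcW ⟨hcon.2, hcon.1⟩
            · rcases Finset.mem_union.mp hp' with h1 | h1 <;>
                rcases Finset.mem_union.mp hq' with h2 | h2
              · exact hkey1 P₀ hP₀W hpack₀ p h1 q h2 hpq c hcW hcon
              · exact hkey2 q h2 p (hP₀W h1) c hcW ⟨hcon.2, hcon.1⟩
              · exact hkey2 p h1 q (hP₀W h2) c hcW hcon
              · exact hpq ((hkey3 p h1 c hcW hcon.1).symm.trans (hkey3 q h2 c hcW hcon.2))
        · intro p hp
          rcases Finset.mem_insert.mp hp with hpe | hp'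
          · subst hpe; exact hLX p hℓ1L
          · rcases Finset.mem_union.mp hp' with h | h
            · exact hP₀X p h
            · exact hLX p (hLinL h)
        · rw [Finset.card_insert_of_notMem hvS, Finset.card_insert_of_notMem hℓ1P,
            Finset.card_union_of_disjoint hdisjS, Finset.card_union_of_disjoint hdisjP]
          omega


end DitreeAux

theorem stmt1 {V : Type*} [Fintype V] (A : V → V → Prop)
    (hirr : ∀ v, ¬ A v v) (hT : IsDitree A) :
    packNum V A = domNum V A := by
  classical
  have hT2 : (ugr A).IsTree := hT
  obtain ⟨hconn, hacyc⟩ := hT2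
  obtain ⟨S, P, hSW, hPW, hdom, hpack, hPX, hle⟩ :=
    core A hirr hacyc (Fintype.card V) Finset.univ ∅ (by simp) (Finset.empty_subset _)
  have hdomS : IsDomSet A (↑S : Set V) := by
    intro z
    obtain ⟨s, hs, hsd⟩ := hdom z (Finset.mem_univ z) (Finset.notMem_empty z)
    exact ⟨s, by exact_mod_cast hs, Set.mem_insert_iff.mpr hsd⟩
  have hpackP : IsPacking A (↑P : Set V) := by
    intro p hp q hq hpq
    rw [Set.disjoint_left]
    intro c hcp hcq
    have hp' : p ∈ P := by exact_mod_cast hp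
    have hq' : q ∈ P := by exact_mod_cast hq
    exact hpack p hp' q hq' hpq c (Finset.mem_univ c)
      ⟨Set.mem_insert_iff.mp hcp, Set.mem_insert_iff.mp hcq⟩
  have hSnon : {n | ∃ S : Set V, IsDomSet A S ∧ S.ncard = n}.Nonempty :=
    ⟨(Set.univ : Set V).ncard, Set.univ,
      fun u => ⟨u, Set.mem_univ u, Set.mem_insert_iff.mpr (Or.inl rfl)⟩, rfl⟩
  have hPbdd : BddAbove {n | ∃ P : Set V, IsPacking A P ∧ P.ncard = n} := by
    refine ⟨Fintype.card V, ?_⟩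
    rintro m ⟨Q, hQ, rfl⟩
    calc Q.ncard ≤ (Set.univ : Set V).ncard :=
          Set.ncard_le_ncard (Set.subset_univ Q) Set.finite_univ
      _ = Fintype.card V := by rw [Set.ncard_univ, Nat.card_eq_fintype_card]
  have hPnon : {n | ∃ P : Set V, IsPacking A P ∧ P.ncard = n}.Nonempty :=
    ⟨0, ∅, Set.pairwise_empty _, by simp⟩
  apply le_antisymm
  · obtain ⟨S₀, hS₀dom, hS₀card⟩ := Nat.sInf_mem hSnon
    refine csSup_le hPnon ?_
    rintro m ⟨Q, hQ, rfl⟩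
    rw [domNum, ← hS₀card]
    choose f hfS hfN using hS₀dom
    refine Set.ncard_le_ncard_of_injOn f (fun p _ => hfS p) ?_ (Set.toFinite S₀)
    intro p hp q hq hfe
    by_contra hne
    have hd : Disjoint (NminusC A p) (NminusC A q) := hQ hp hq hne
    rw [Set.disjoint_left] at hd
    refine hd (a := f p) ?_ ?_
    · rcases Set.mem_insert_iff.mp (hfN p) with h | h
      · rw [← h]; exact Set.mem_insert _ _
      · exact Set.mem_insert_of_mem _ h
    · rcases Set.mem_insert_iff.mp (hfe ▸ hfN q) with h | h
      · rw [← h]; exact Set.mem_insert _ _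
      · exact Set.mem_insert_of_mem _ h
  · calc domNum V A ≤ (↑S : Set V).ncard := Nat.sInf_le ⟨↑S, hdomS, rfl⟩
      _ = S.card := Set.ncard_coe_finset S
      _ ≤ P.card := hle
      _ = (↑P : Set V).ncard := (Set.ncard_coe_finset P).symm
      _ ≤ packNum V A := le_csSup hPbdd ⟨↑P, hpackP, rfl⟩
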